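/- Let r ∈ ℝ^d have all entries with pairwise distinct absolute values, and define the minimal gap Δ_r = min over pairs i≠j with r_i ≠ r_j of ||r_i| − |r_j||/2 > 0. Let a** > 0, and suppose coordinate 1 satisfies ||r_1| − 0.5a**| ≤ ||r_j| − 0.5a**| for all j ≥ 2 and |r_1| ≥ 0.5a**. Then for any a'' with a** − Δ_r ≤ a'' ≤ a** and a'' > 0, every coordinate j satisfies: |r_j| ≥ 0.5a** implies |r_j| ≥ 0.5a'', and |r_j| < 0.5a** implies |r_j| < 0.5a''. Consequently the rounding of r/a'' to {-1,0,1}^d coordinate-wise equals the rounding of r/a**. -/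
import Mathlib


/-- Coordinate-wise rounding to {-1,0,1}: sign(x) if |x| ≥ 1/2, else 0. -/
noncomputable def roundTernary (x : ℝ) : ℝ :=
  if x ≥ 1/2 then 1 else if x ≤ -(1/2) then -1 else 0

/-- Stability of ternary rounding under a perturbation of the scale a** by at most
the minimal gap Δ of r (entries of r having pairwise distinct absolute values). -/
theorem stmt_9 (d : ℕ) (r : Fin d → ℝ) (Δ : ℝ) (hΔ : 0 < Δ)
    (hdist : ∀ i j, i ≠ j → |r i| ≠ |r j|)
    (hgap : ∀ i j, r i ≠ r j → 2 * Δ ≤ |(|r i| - |r j|)|)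
    (astar : ℝ) (hastar : 0 < astar)
    (i0 : Fin d)
    (hmin : ∀ j, |(|r i0| - 0.5 * astar)| ≤ |(|r j| - 0.5 * astar)|)
    (hbig : 0.5 * astar ≤ |r i0|)
    (a'' : ℝ) (ha1 : astar - Δ ≤ a'') (ha2 : a'' ≤ astar) (ha3 : 0 < a'') :
    (∀ j, (0.5 * astar ≤ |r j| → 0.5 * a'' ≤ |r j|) ∧
          (|r j| < 0.5 * astar → |r j| < 0.5 * a'')) ∧
    (∀ j, roundTernary (r j / a'') = roundTernary (r j / astar)) := by
  have key : ∀ j, (0.5 * astar ≤ |r j| → 0.5 * a'' ≤ |r j|) ∧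
          (|r j| < 0.5 * astar → |r j| < 0.5 * a'') := by
    intro j
    constructor
    · intro h; nlinarith
    · intro h
      by_contra hc
      push_neg at hc
      have hne : r i0 ≠ r j := by
        intro he
        rw [he] at hbig
        linarith
      have hg := hgap i0 j hne
      have h1 := hmin j
      have habs1 : |(|r i0| - 0.5 * astar)| = |r i0| - 0.5 * astar :=
        abs_of_nonneg (by linarith)
      have habs2 : |(|r j| - 0.5 * astar)| = 0.5 * astar - |r j| := by
        rw [abs_of_nonpos (by linarith)]; ring
      rw [habs1, habs2] at h1
      have h3 : |(|r i0| - |r j|)| = |r i0| - |r j| :=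
        abs_of_nonneg (by linarith)
      rw [h3] at hg
      linarith
  refine ⟨key, ?_⟩
  intro j
  unfold roundTernary
  rcases le_or_gt (0.5 * astar) (|r j|) with hc | hc
  · have h2 : 0.5 * a'' ≤ |r j| := (key j).1 hc
    rcases abs_cases (r j) with ⟨he, hp⟩ | ⟨he, hp⟩
    · rw [if_pos, if_pos]
      · rw [ge_iff_le, le_div_iff₀ hastar]; nlinarith [he ▸ hc]
      · rw [ge_iff_le, le_div_iff₀ ha3]; nlinarith [he ▸ h2]
    · have hn1 : ¬ (r j / a'' ≥ 1/2) := by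
        rw [ge_iff_le, not_le]
        have := div_neg_of_neg_of_pos hp ha3
        linarith
      have hn2 : ¬ (r j / astar ≥ 1/2) := by
        rw [ge_iff_le, not_le]
        have := div_neg_of_neg_of_pos hp hastar
        linarith
      rw [if_neg hn1, if_neg hn2, if_pos, if_pos]
      · rw [div_le_iff₀ hastar]
        nlinarith [he ▸ hc]
      · rw [div_le_iff₀ ha3]
        nlinarith [he ▸ h2]
  · have h2 : |r j| < 0.5 * a'' := (key j).2 hc
    have hb1 : -(0.5 * a'') < r j ∧ r j < 0.5 * a'' := abs_lt.mp (by linarith)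
    have hb2 : -(0.5 * astar) < r j ∧ r j < 0.5 * astar := abs_lt.mp (by linarith)
    rw [if_neg, if_neg, if_neg, if_neg]
    · rw [not_le, lt_div_iff₀ hastar]; nlinarith [hb2.1]
    · rw [ge_iff_le, not_le, div_lt_iff₀ hastar]; nlinarith [hb2.2]
    · rw [not_le, lt_div_iff₀ ha3]; nlinarith [hb1.1]
    · rw [ge_iff_le, not_le, div_lt_iff₀ ha3]; nlinarith [hb1.2]
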